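/- arXiv:2503.23504 — 3 statements merged into one kernel-verified Lean document; each statement's English description precedes it below -/
import Mathlib

section
/- Let (X, f_{1,∞}) be a nonautonomous system on a compact metric space, K nonempty, and for k ∈ ℕ let f_{1,∞}^k be the k-th power system with maps g_j = f_{(j-1)k+1}^k, so g_1^j = f_1^{jk}. Then for every s > 0, the upper s-entropy satisfies h̄_K(f_{1,∞}^k, s) ≤ k^s · h̄_K(f_{1,∞}, s), and consequently the upper entropy dimension satisfies D̄_K(f_{1,∞}^k) ≤ D̄_K(f_{1,∞}). -/
open Filter Set Topology
open scoped ENNReal NNReal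

noncomputable section

/-- `comps f i n` is the composition `f_i^n = f_{i+n-1} ∘ ⋯ ∘ f_i` (indices from 1). -/
def comps {X : Type*} (f : ℕ → X → X) (i : ℕ) : ℕ → X → X
  | 0 => id
  | n + 1 => f (i + n) ∘ comps f i n

/-- Minimal cardinality (in `ℕ∞`) of a subfamily of `U` covering `K`. -/
def coverNumOn {X : Type*} (K : Set X) (U : Set (Set X)) : ℕ∞ :=
  sInf {n : ℕ∞ | ∃ F ⊆ U, F.Finite ∧ (F.ncard : ℕ∞) = n ∧ K ⊆ ⋃₀ F}

/-- `U` is a finite open cover of the whole space. -/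
def IsFiniteOpenCover {X : Type*} [TopologicalSpace X] (U : Set (Set X)) : Prop :=
  U.Finite ∧ (∀ u ∈ U, IsOpen u) ∧ ⋃₀ U = Set.univ

/-- Dynamical join `⋁_{j=0}^{n-1} (f_i^j)⁻¹ 𝒰`. -/
def dynJoin {X : Type*} (f : ℕ → X → X) (i : ℕ) (U : Set (Set X)) (n : ℕ) : Set (Set X) :=
  {V | ∃ c : ℕ → Set X, (∀ j < n, c j ∈ U) ∧ V = ⋂ j ∈ Finset.range n, comps f i j ⁻¹' c j}

/-- Upper `s`-entropy of the system started at time `i` w.r.t. the cover `U`, on `K`. -/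
def hCover {X : Type*} (f : ℕ → X → X) (i : ℕ) (K : Set X) (U : Set (Set X)) (s : ℝ) : ℝ≥0∞ :=
  Filter.limsup (fun n : ℕ =>
    ENNReal.ofReal (Real.log ((coverNumOn K (dynJoin f i U n)).toNat)) / (n : ℝ≥0∞) ^ s)
    Filter.atTop

/-- Upper `s`-entropy: supremum over all finite open covers. -/
def hCoverSup {X : Type*} [TopologicalSpace X] (f : ℕ → X → X) (i : ℕ) (K : Set X) (s : ℝ) :
    ℝ≥0∞ :=
  ⨆ U ∈ {U : Set (Set X) | IsFiniteOpenCover U}, hCover f i K U s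

/-- Upper classical topological entropy dimension (cover version), in `ℝ≥0∞`. -/
def DbarCover {X : Type*} [TopologicalSpace X] (f : ℕ → X → X) (i : ℕ) (K : Set X) : ℝ≥0∞ :=
  sInf (ENNReal.ofReal '' {s : ℝ | 0 < s ∧ hCoverSup f i K s = 0})

section Metric
variable {X : Type*} [PseudoMetricSpace X]

/-- `E` is an `(n,ε)`-spanning set of `K`. -/
def IsSpanningSet (f : ℕ → X → X) (K : Set X) (n : ℕ) (ε : ℝ) (E : Set X) : Prop :=
  ∀ y ∈ K, ∃ x ∈ E, ∀ j < n, dist (comps f 1 j y) (comps f 1 j x) ≤ ε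

/-- `F` is an `(n,ε)`-separated subset of `K`. -/
def IsSepSet (f : ℕ → X → X) (K : Set X) (n : ℕ) (ε : ℝ) (F : Set X) : Prop :=
  F ⊆ K ∧ ∀ x ∈ F, ∀ y ∈ F, x ≠ y → ∃ j < n, ε < dist (comps f 1 j x) (comps f 1 j y)

/-- Minimal cardinality of an `(n,ε)`-spanning set of `K`. -/
def spanNum (f : ℕ → X → X) (K : Set X) (n : ℕ) (ε : ℝ) : ℕ :=
  sInf {m : ℕ | ∃ E : Set X, E.Finite ∧ E.ncard = m ∧ IsSpanningSet f K n ε E}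

/-- Maximal cardinality of an `(n,ε)`-separated subset of `K`. -/
def sepNum (f : ℕ → X → X) (K : Set X) (n : ℕ) (ε : ℝ) : ℕ :=
  sSup {m : ℕ | ∃ F : Set X, F.Finite ∧ F.ncard = m ∧ IsSepSet f K n ε F}

/-- Upper `s`-entropy via spanning sets. -/
def hSpan (f : ℕ → X → X) (K : Set X) (s : ℝ) : ℝ≥0∞ :=
  Filter.limsup (fun ε : ℝ =>
    Filter.limsup
      (fun n : ℕ => ENNReal.ofReal (Real.log (spanNum f K n ε : ℝ)) / (n : ℝ≥0∞) ^ s)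
      Filter.atTop) (𝓝[>] (0 : ℝ))

/-- Upper `s`-entropy via separated sets. -/
def hSep (f : ℕ → X → X) (K : Set X) (s : ℝ) : ℝ≥0∞ :=
  Filter.limsup (fun ε : ℝ =>
    Filter.limsup
      (fun n : ℕ => ENNReal.ofReal (Real.log (sepNum f K n ε : ℝ)) / (n : ℝ≥0∞) ^ s)
      Filter.atTop) (𝓝[>] (0 : ℝ))

/-- Lower `s`-entropy via separated sets. -/
def hSepLow (f : ℕ → X → X) (K : Set X) (s : ℝ) : ℝ≥0∞ :=
  Filter.limsup (fun ε : ℝ =>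
    Filter.liminf
      (fun n : ℕ => ENNReal.ofReal (Real.log (sepNum f K n ε : ℝ)) / (n : ℝ≥0∞) ^ s)
      Filter.atTop) (𝓝[>] (0 : ℝ))

/-- Upper entropy dimension (spanning-set version). -/
def DbarSpan (f : ℕ → X → X) (K : Set X) : ℝ≥0∞ :=
  sInf (ENNReal.ofReal '' {s : ℝ | 0 < s ∧ hSpan f K s = 0})

/-- Upper entropy dimension (separated-set version). -/
def DbarSep (f : ℕ → X → X) (K : Set X) : ℝ≥0∞ :=
  sInf (ENNReal.ofReal '' {s : ℝ | 0 < s ∧ hSep f K s = 0})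

/-- Lower entropy dimension (separated-set version). -/
def DlowSep (f : ℕ → X → X) (K : Set X) : ℝ≥0∞ :=
  sInf (ENNReal.ofReal '' {s : ℝ | 0 < s ∧ hSepLow f K s = 0})

/-- Diameter of a cover. -/
def covDiam (U : Set (Set X)) : ℝ≥0∞ := ⨆ u ∈ U, EMetric.diam u

end Metric

section Pesin
variable {X : Type*}

/-- The set `X(𝐔)` determined by a string `p = (m, c)`. -/
def stringSet (f : ℕ → X → X) (p : ℕ × (ℕ → Set X)) : Set X :=
  ⋂ j ∈ Finset.range p.1, comps f 1 j ⁻¹' p.2 j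

/-- `G` is a countable collection of strings over `U` of length `≥ N` covering `K`. -/
def IsStringCover (f : ℕ → X → X) (U : Set (Set X)) (K : Set X) (N : ℕ)
    (G : Set (ℕ × (ℕ → Set X))) : Prop :=
  G.Countable ∧ (∀ p ∈ G, N ≤ p.1 ∧ ∀ j < p.1, p.2 j ∈ U) ∧ K ⊆ ⋃ p ∈ G, stringSet f p

/-- The Carathéodory–Pesin pre-measure `M(f,K,s,𝒰,α,N)`. -/
def pesinM (f : ℕ → X → X) (K : Set X) (s : ℝ) (U : Set (Set X)) (α : ℝ) (N : ℕ) : ℝ≥0∞ :=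
  sInf {t : ℝ≥0∞ | ∃ G : Set (ℕ × (ℕ → Set X)), IsStringCover f U K N G ∧
    t = ∑' p : G, ENNReal.ofReal (Real.exp (-α * (p.1.1 : ℝ) ^ s))}

/-- The Carathéodory–Pesin outer measure `m(f,K,s,𝒰,α) = lim_{N→∞} M(f,K,s,𝒰,α,N)`. -/
def pesinOuter (f : ℕ → X → X) (K : Set X) (s : ℝ) (U : Set (Set X)) (α : ℝ) : ℝ≥0∞ :=
  ⨆ N : ℕ, pesinM f K s U α N

/-- Critical value `D(f,K,s,𝒰)` where `m(f,K,s,𝒰,·)` jumps from `∞` to `0`. -/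
def pesinCrit (f : ℕ → X → X) (K : Set X) (s : ℝ) (U : Set (Set X)) : EReal :=
  sInf ((fun α : ℝ => (α : EReal)) '' {α : ℝ | pesinOuter f K s U α = 0})

/-- The Pesin `s`-topological entropy `D(f,K,s)`. -/
def pesinEnt [TopologicalSpace X] (f : ℕ → X → X) (K : Set X) (s : ℝ) : EReal :=
  ⨆ U ∈ {U : Set (Set X) | IsFiniteOpenCover U}, pesinCrit f K s U

/-- The Pesin topological entropy dimension `D(f,K)`. -/
def pesinDim [TopologicalSpace X] (f : ℕ → X → X) (K : Set X) : ℝ≥0∞ :=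
  sInf (ENNReal.ofReal '' {s : ℝ | 0 < s ∧ pesinEnt f K s = 0})

end Pesin

end
section Aux

lemma comps_add {X : Type*} (f : ℕ → X → X) (i m n : ℕ) :
    comps f i (m + n) = comps f (i + m) n ∘ comps f i m := by
  induction n with
  | zero => rfl
  | succ n ih =>
    have h : m + (n + 1) = (m + n) + 1 := by ring
    rw [h]
    show f (i + (m + n)) ∘ comps f i (m + n) = _
    rw [ih]
    show f (i + (m + n)) ∘ (comps f (i + m) n ∘ comps f i m)
      = (f ((i + m) + n) ∘ comps f (i + m) n) ∘ comps f i m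
    rw [Nat.add_assoc]
    rfl

lemma comps_continuous {X : Type*} [TopologicalSpace X] {f : ℕ → X → X}
    (hf : ∀ i, Continuous (f i)) (i n : ℕ) : Continuous (comps f i n) := by
  induction n with
  | zero => exact continuous_id
  | succ n ih => exact (hf _).comp ih

lemma comps_pow {X : Type*} {f g : ℕ → X → X} {k : ℕ}
    (hg : ∀ j, g j = comps f ((j - 1) * k + 1) k) (j : ℕ) :
    comps g 1 j = comps f 1 (j * k) := by
  induction j with
  | zero => simp [comps]
  | succ j ih =>
    have h1 : (j + 1) * k = j * k + k := by ring
    rw [h1, comps_add f 1 (j * k) k]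
    show g (1 + j) ∘ comps g 1 j = _
    rw [ih, hg (1 + j)]
    have h2 : (1 + j - 1) * k + 1 = 1 + j * k := by
      rw [Nat.add_comm 1 j, Nat.add_sub_cancel, Nat.add_comm]
    rw [h2]

lemma exists_finite_spanning {X : Type*} [MetricSpace X] [CompactSpace X] {f : ℕ → X → X}
    (hf : ∀ i, Continuous (f i)) (K : Set X) (m : ℕ) {ε : ℝ} (hε : 0 < ε) :
    ∃ E : Set X, E.Finite ∧ IsSpanningSet f K m ε E := by
  obtain ⟨t, ht⟩ := IsCompact.elim_finite_subcover (isCompact_univ (X := X))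
    (fun y : X => ⋂ j ∈ Finset.range m, comps f 1 j ⁻¹' Metric.ball (comps f 1 j y) ε)
    (fun y => isOpen_biInter_finset fun j _ =>
      Metric.isOpen_ball.preimage (comps_continuous hf 1 j))
    (fun x _ => Set.mem_iUnion.2 ⟨x, Set.mem_iInter₂.2 fun j _ => Metric.mem_ball_self hε⟩)
  refine ⟨↑t, t.finite_toSet, fun y _ => ?_⟩
  obtain ⟨x, hx1, hx2⟩ := Set.mem_iUnion₂.1 (ht (Set.mem_univ y))
  exact ⟨x, hx1, fun j hj =>
    le_of_lt (Set.mem_iInter₂.1 hx2 j (Finset.mem_range.2 hj))⟩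

lemma spanNum_pow_le {X : Type*} [MetricSpace X] [CompactSpace X] {f g : ℕ → X → X}
    (hf : ∀ i, Continuous (f i)) (K : Set X) {k : ℕ} (hk : 1 ≤ k)
    (hg : ∀ j, g j = comps f ((j - 1) * k + 1) k) {ε : ℝ} (hε : 0 < ε) (n : ℕ) :
    spanNum g K n ε ≤ spanNum f K (n * k) ε := by
  have hne : {m : ℕ | ∃ E : Set X, E.Finite ∧ E.ncard = m ∧
      IsSpanningSet f K (n * k) ε E}.Nonempty := by
    obtain ⟨E, hE, hsp⟩ := exists_finite_spanning hf K (n * k) hε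
    exact ⟨E.ncard, E, hE, rfl, hsp⟩
  obtain ⟨E, hEfin, hEcard, hEsp⟩ := Nat.sInf_mem hne
  apply Nat.sInf_le
  refine ⟨E, hEfin, hEcard, fun y hy => ?_⟩
  obtain ⟨x, hx, hdist⟩ := hEsp y hy
  refine ⟨x, hx, fun j hj => ?_⟩
  rw [comps_pow hg]
  exact hdist (j * k) ((Nat.mul_lt_mul_right (show 0 < k by omega)).2 hj)

end Aux

/-- Power rule (inequality): `h̄_K(f^k, s) ≤ kˢ h̄_K(f,s)` and `D̄_K(f^k) ≤ D̄_K(f)`. -/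
theorem power_rule_le {X : Type*} [MetricSpace X] [CompactSpace X] (f : ℕ → X → X)
    (hf : ∀ i, Continuous (f i)) (K : Set X) (hK : K.Nonempty) (k : ℕ) (hk : 1 ≤ k)
    (g : ℕ → X → X) (hg : ∀ j, g j = comps f ((j - 1) * k + 1) k) :
    (∀ s : ℝ, 0 < s → hSpan g K s ≤ (k : ℝ≥0∞) ^ s * hSpan f K s) ∧
      DbarSpan g K ≤ DbarSpan f K := by
  have key : ∀ s : ℝ, 0 < s → hSpan g K s ≤ (k : ℝ≥0∞) ^ s * hSpan f K s := by
    intro s hs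
    set c : ℝ≥0∞ := (k : ℝ≥0∞) ^ s with hcdef
    have hc0 : c ≠ 0 := by
      refine (ENNReal.rpow_pos ?_ (by simp)).ne'
      exact_mod_cast Nat.cast_pos.2 (by omega : 0 < k)
    have hcT : c ≠ ⊤ := ENNReal.rpow_ne_top_of_nonneg hs.le (by simp)
    have inner : ∀ ε : ℝ, 0 < ε →
        Filter.limsup (fun n : ℕ =>
            ENNReal.ofReal (Real.log (spanNum g K n ε : ℝ)) / (n : ℝ≥0∞) ^ s) Filter.atTop
          ≤ c * Filter.limsup (fun n : ℕ =>
            ENNReal.ofReal (Real.log (spanNum f K n ε : ℝ)) / (n : ℝ≥0∞) ^ s) Filter.atTop := by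
      intro ε hε
      set u : ℕ → ℝ≥0∞ := fun n =>
        ENNReal.ofReal (Real.log (spanNum f K n ε : ℝ)) / (n : ℝ≥0∞) ^ s with hudef
      have step1 : ∀ᶠ n : ℕ in Filter.atTop,
          ENNReal.ofReal (Real.log (spanNum g K n ε : ℝ)) / (n : ℝ≥0∞) ^ s
            ≤ c * u (n * k) := by
        filter_upwards [Filter.eventually_ge_atTop 1] with n hn
        have hspan : spanNum g K n ε ≤ spanNum f K (n * k) ε :=
          spanNum_pow_le hf K hk hg hε n
        have hlog : ENNReal.ofReal (Real.log (spanNum g K n ε : ℝ))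
            ≤ ENNReal.ofReal (Real.log (spanNum f K (n * k) ε : ℝ)) := by
          apply ENNReal.ofReal_le_ofReal
          rcases Nat.eq_zero_or_pos (spanNum g K n ε) with h0 | hpos
          · rw [h0, Nat.cast_zero, Real.log_zero]
            rcases Nat.eq_zero_or_pos (spanNum f K (n * k) ε) with h1 | h1
            · simp [h1]
            · exact Real.log_nonneg (by exact_mod_cast h1)
          · exact Real.log_le_log (by exact_mod_cast hpos) (by exact_mod_cast hspan)
        have hrw : c * u (n * k)
            = ENNReal.ofReal (Real.log (spanNum f K (n * k) ε : ℝ)) / (n : ℝ≥0∞) ^ s := by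
          rw [hudef]
          simp only
          rw [Nat.cast_mul, ENNReal.mul_rpow_of_nonneg _ _ hs.le, ← hcdef,
            mul_comm ((n : ℝ≥0∞) ^ s) c, ← mul_div_assoc,
            ENNReal.mul_div_mul_left _ _ hc0 hcT]
        rw [hrw]
        exact ENNReal.div_le_div_right hlog _
      have step3 : Filter.limsup (fun n : ℕ => u (n * k)) Filter.atTop
          ≤ Filter.limsup u Filter.atTop := by
        have hφ : Filter.Tendsto (fun n : ℕ => n * k) Filter.atTop Filter.atTop :=
          Filter.tendsto_atTop_mono (fun n => Nat.le_mul_of_pos_right n (by omega))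
            Filter.tendsto_id
        calc Filter.limsup (fun n : ℕ => u (n * k)) Filter.atTop
            = Filter.limsup u (Filter.map (fun n : ℕ => n * k) Filter.atTop) :=
              Filter.limsup_comp u _ _
          _ ≤ Filter.limsup u Filter.atTop := Filter.limsup_le_limsup_of_le hφ
      calc Filter.limsup (fun n : ℕ =>
              ENNReal.ofReal (Real.log (spanNum g K n ε : ℝ)) / (n : ℝ≥0∞) ^ s) Filter.atTop
          ≤ Filter.limsup (fun n : ℕ => c * u (n * k)) Filter.atTop :=
            Filter.limsup_le_limsup step1
        _ = c * Filter.limsup (fun n : ℕ => u (n * k)) Filter.atTop :=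
            ENNReal.limsup_const_mul_of_ne_top hcT
        _ ≤ c * Filter.limsup u Filter.atTop := mul_le_mul_right step3 c
    have ev : ∀ᶠ ε in nhdsWithin (0 : ℝ) (Set.Ioi 0),
        Filter.limsup (fun n : ℕ =>
            ENNReal.ofReal (Real.log (spanNum g K n ε : ℝ)) / (n : ℝ≥0∞) ^ s) Filter.atTop
          ≤ c * Filter.limsup (fun n : ℕ =>
            ENNReal.ofReal (Real.log (spanNum f K n ε : ℝ)) / (n : ℝ≥0∞) ^ s) Filter.atTop := by
      filter_upwards [eventually_mem_nhdsWithin] with ε hε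
      exact inner ε hε
    calc hSpan g K s
        ≤ Filter.limsup (fun ε : ℝ => c * Filter.limsup (fun n : ℕ =>
            ENNReal.ofReal (Real.log (spanNum f K n ε : ℝ)) / (n : ℝ≥0∞) ^ s) Filter.atTop)
            (nhdsWithin (0 : ℝ) (Set.Ioi 0)) := Filter.limsup_le_limsup ev
      _ = c * hSpan f K s := ENNReal.limsup_const_mul_of_ne_top hcT
  refine ⟨key, ?_⟩
  apply sInf_le_sInf
  rintro x ⟨s, ⟨hs, h0⟩, rfl⟩
  refine ⟨s, ⟨hs, ?_⟩, rfl⟩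
  have h := key s hs
  rw [h0, mul_zero] at h
  exact le_antisymm h zero_le
end

section
/- Let a : ℕ → ℝ≥0 be nondecreasing and k ∈ ℕ with k ≥ 1. Then for every s > 0, limsup_{n→∞} a(kn)/n^s = k^s · limsup_{n→∞} a(n)/n^s. -/
open Filter Set Topology
open scoped ENNReal NNReal

/-- For a nondecreasing sequence, `limsup a(kn)/nˢ = kˢ · limsup a(n)/nˢ`. -/
theorem limsup_subseq_rpow (a : ℕ → NNReal) (ha : Monotone a) (k : ℕ) (hk : 1 ≤ k)
    (s : ℝ) (hs : 0 < s) :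
    Filter.limsup (fun n : ℕ => (a (k * n) : ℝ≥0∞) / (n : ℝ≥0∞) ^ s) Filter.atTop =
      (k : ℝ≥0∞) ^ s *
        Filter.limsup (fun n : ℕ => (a n : ℝ≥0∞) / (n : ℝ≥0∞) ^ s) Filter.atTop := by
  set c : ℝ≥0∞ := (k : ℝ≥0∞) ^ s with hc
  have hc0 : c ≠ 0 := by
    simp only [hc, ne_eq, ENNReal.rpow_eq_zero_iff, not_or]
    push_neg
    constructor
    · intro h; exact absurd (Nat.cast_eq_zero.mp h) (by omega)
    · intro h; exact absurd h (ENNReal.natCast_ne_top k)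
  have hcT : c ≠ ⊤ := by
    simp only [hc, ne_eq, ENNReal.rpow_eq_top_iff, not_or]
    push_neg
    constructor
    · intro h; exact absurd (Nat.cast_eq_zero.mp h) (by omega)
    · intro h; exact absurd h (ENNReal.natCast_ne_top k)
  set F : ℕ → ℝ≥0∞ := fun n => (a n : ℝ≥0∞) / (n : ℝ≥0∞) ^ s with hF
  set G : ℕ → ℝ≥0∞ := fun n => (a (k * n) : ℝ≥0∞) / ((k * n : ℕ) : ℝ≥0∞) ^ s with hG
  -- rewrite the LHS as limsup (c * G)
  have key : (fun n : ℕ => (a (k * n) : ℝ≥0∞) / (n : ℝ≥0∞) ^ s) =ᶠ[atTop]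
      (fun n => c * G n) := by
    filter_upwards [eventually_ge_atTop 1] with n hn
    have hkn : ((k * n : ℕ) : ℝ≥0∞) ^ s = c * (n : ℝ≥0∞) ^ s := by
      push_cast
      rw [ENNReal.mul_rpow_of_nonneg _ _ hs.le]
    simp only [hG, hkn]
    rw [ENNReal.div_eq_inv_mul, ENNReal.div_eq_inv_mul, ENNReal.mul_inv (Or.inl hc0) (Or.inl hcT),
      mul_assoc, ← mul_assoc c, ENNReal.mul_inv_cancel hc0 hcT, one_mul]
  rw [limsup_congr key, ENNReal.limsup_const_mul_of_ne_top hcT]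
  congr 1
  -- remains: limsup G = limsup F
  have hmul : Tendsto (fun n : ℕ => k * n) atTop atTop :=
    Filter.tendsto_atTop_atTop_of_monotone (fun x y h => Nat.mul_le_mul_left k h)
      (fun b => ⟨b, Nat.le_mul_of_pos_left b (by omega)⟩)
  apply le_antisymm
  · -- limsup G ≤ limsup F : G = F ∘ (k * ·)
    have hGF : G = F ∘ (fun n => k * n) := rfl
    rw [hGF, Filter.limsup_comp]
    exact Filter.limsup_le_limsup_of_le hmul
  · -- limsup F ≤ limsup G
    set L := limsup G atTop with hL
    set φ : ℕ → ℕ := fun n => (n + k - 1) / k with hφ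
    have hφ_ge : ∀ n, n ≤ k * φ n := by
      intro n
      have h1 := Nat.div_add_mod (n + k - 1) k
      have h2 := Nat.mod_lt (n + k - 1) (show 0 < k by omega)
      simp only [hφ]
      omega
    have hφ_le : ∀ n, k * φ n ≤ n + k := by
      intro n
      have h1 := Nat.div_add_mod (n + k - 1) k
      simp only [hφ]
      omega
    have hφ_tendsto : Tendsto φ atTop atTop := by
      apply Filter.tendsto_atTop_atTop.mpr
      intro b
      refine ⟨k * b, fun n hn => ?_⟩
      have := hφ_ge n
      have : k * b ≤ k * φ n := le_trans hn this
      exact Nat.le_of_mul_le_mul_left this (by omega)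
    refine ENNReal.le_of_forall_pos_le_add fun ε hε hLtop => ?_
    set d : ℝ≥0∞ := 1 + (ε : ℝ≥0∞) / (L + 1) with hd
    have hL1top : L + 1 ≠ ⊤ := ENNReal.add_ne_top.mpr ⟨hLtop.ne, ENNReal.one_ne_top⟩
    have hd1 : 1 < d :=
      ENNReal.lt_add_right ENNReal.one_ne_top
        (ENNReal.div_pos (by exact_mod_cast hε.ne') hL1top).ne' 
    have hdL : d * L ≤ L + ε := by
      rw [hd, add_mul, one_mul]
      gcongr
      calc (ε : ℝ≥0∞) / (L + 1) * L ≤ (ε : ℝ≥0∞) / (L + 1) * (L + 1) := by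
            gcongr; exact le_self_add
        _ = ε := ENNReal.div_mul_cancel (by simp) hL1top
    -- the ratio ((n+k)/n)^s tends to 1
    have hratio : Tendsto (fun n : ℕ => (((n + k : ℕ) : ℝ≥0∞) / (n : ℝ≥0∞)) ^ s) atTop (𝓝 1) := by
      have h1 : Tendsto (fun n : ℕ => ((n + k : ℕ) : ℝ≥0∞) / (n : ℝ≥0∞)) atTop (𝓝 1) := by
        have heq : (fun n : ℕ => ((n + k : ℕ) : ℝ≥0∞) / (n : ℝ≥0∞)) =ᶠ[atTop]
            (fun n : ℕ => 1 + (k : ℝ≥0∞) * ((n : ℝ≥0∞))⁻¹) := by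
          filter_upwards [eventually_ge_atTop 1] with n hn
          have hn0 : ((n : ℝ≥0∞)) ≠ 0 := Nat.cast_ne_zero.mpr (by omega)
          push_cast
          rw [ENNReal.add_div, ENNReal.div_self hn0 (ENNReal.natCast_ne_top n), div_eq_mul_inv]
        rw [tendsto_congr' heq]
        have : Tendsto (fun n : ℕ => (k : ℝ≥0∞) * ((n : ℝ≥0∞))⁻¹) atTop (𝓝 0) := by
          have := ENNReal.Tendsto.const_mul (a := (k : ℝ≥0∞)) ENNReal.tendsto_inv_nat_nhds_zero
            (Or.inr (ENNReal.natCast_ne_top k))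
          simpa using this
        simpa using Tendsto.const_add 1 this
      have := (ENNReal.continuous_rpow_const (y := s)).tendsto 1
      have := this.comp h1
      simpa [ENNReal.one_rpow, Function.comp_def] using this
    have hev : ∀ᶠ n : ℕ in atTop, F n ≤ d * G (φ n) := by
      have hlt := hratio.eventually_lt_const hd1
      filter_upwards [hlt, eventually_ge_atTop 1] with n hn hn1
      have hφ1 : 1 ≤ φ n := by
        have := hφ_ge n
        by_contra h
        push_neg at h
        interval_cases (φ n)
        omega
      have hkφpos : 1 ≤ k * φ n := le_trans hn1 (hφ_ge n)
      have hkφ0 : ((k * φ n : ℕ) : ℝ≥0∞) ≠ 0 := Nat.cast_ne_zero.mpr (by omega)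
      have hkφT : ((k * φ n : ℕ) : ℝ≥0∞) ≠ ⊤ := ENNReal.natCast_ne_top _
      have hpow0 : ((k * φ n : ℕ) : ℝ≥0∞) ^ s ≠ 0 := by
        simp only [ne_eq, ENNReal.rpow_eq_zero_iff, not_or, not_and, not_lt]
        exact ⟨fun h => absurd h hkφ0, fun h => absurd h hkφT⟩
      have hpowT : ((k * φ n : ℕ) : ℝ≥0∞) ^ s ≠ ⊤ := by
        simp only [ne_eq, ENNReal.rpow_eq_top_iff, not_or, not_and, not_lt]
        exact ⟨fun h => absurd h hkφ0, fun h => absurd h hkφT⟩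
      calc F n = (a n : ℝ≥0∞) / (n : ℝ≥0∞) ^ s := rfl
        _ ≤ (a (k * φ n) : ℝ≥0∞) / (n : ℝ≥0∞) ^ s := by
            gcongr
            exact_mod_cast ha (hφ_ge n)
        _ = G (φ n) * (((k * φ n : ℕ) : ℝ≥0∞) ^ s / (n : ℝ≥0∞) ^ s) := by
            simp only [hG]
            rw [div_eq_mul_inv, div_eq_mul_inv, div_eq_mul_inv, mul_assoc,
              ← mul_assoc (((k * φ n : ℕ) : ℝ≥0∞) ^ s)⁻¹,
              ENNReal.inv_mul_cancel hpow0 hpowT, one_mul]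
        _ ≤ G (φ n) * ((((n + k : ℕ) : ℝ≥0∞) / (n : ℝ≥0∞)) ^ s) := by
            gcongr
            rw [← ENNReal.div_rpow_of_nonneg _ _ hs.le]
            exact ENNReal.rpow_le_rpow
              (ENNReal.div_le_div (by exact_mod_cast hφ_le n) le_rfl) hs.le
        _ ≤ G (φ n) * d := mul_le_mul_right hn.le _
        _ = d * G (φ n) := mul_comm _ _
    calc limsup F atTop ≤ limsup (fun n => d * G (φ n)) atTop := Filter.limsup_le_limsup hev
      _ = d * limsup (G ∘ φ) atTop := ENNReal.limsup_const_mul_of_ne_top (by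
          simp only [hd]
          exact ENNReal.add_ne_top.mpr ⟨ENNReal.one_ne_top,
            (ENNReal.div_lt_top ENNReal.coe_ne_top (by simp)).ne⟩)
      _ ≤ d * L := by
          gcongr
          rw [Filter.limsup_comp]
          exact Filter.limsup_le_limsup_of_le hφ_tendsto
      _ ≤ L + ε := hdL
end

section
/- Let (X,d) be a compact metric space, (X, f_{1,∞}) a nonautonomous system, and K a nonempty f_{1,∞}-invariant subset. Then D(f_{1,∞},K,s) ≤ h̲_K(f_{1,∞},s) for every s > 0, where h̲ is the lower s-entropy defined via spanning sets; consequently the Pesin entropy dimension satisfies D(f_{1,∞},K) ≤ D̲_K(f_{1,∞}) ≤ D̄_K(f_{1,∞}). -/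
open Filter Set Topology
open scoped ENNReal NNReal

section AuxProof
open Metric

variable {X : Type*} [MetricSpace X] [CompactSpace X]

lemma comps_cont {f : ℕ → X → X} (hf : ∀ i, Continuous (f i)) (i n : ℕ) :
    Continuous (comps f i n) := by
  induction n with
  | zero => exact continuous_id
  | succ n ih => exact (hf (i + n)).comp ih

lemma exists_eta {f : ℕ → X → X} (hf : ∀ i, Continuous (f i)) (n : ℕ) {ε : ℝ} (hε : 0 < ε) :
    ∃ η > 0, ∀ x y : X, dist x y < η → ∀ j < n,
      dist (comps f 1 j x) (comps f 1 j y) ≤ ε := by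
  induction n with
  | zero => exact ⟨1, one_pos, fun x y _ j hj => absurd hj (Nat.not_lt_zero j)⟩
  | succ n ih =>
    obtain ⟨η, hη, hη2⟩ := ih
    obtain ⟨η', hη', h2⟩ := Metric.uniformContinuous_iff.mp
      (CompactSpace.uniformContinuous_of_continuous (comps_cont hf 1 n)) ε hε
    refine ⟨min η η', lt_min hη hη', fun x y h j hj => ?_⟩
    rcases Nat.lt_succ_iff_lt_or_eq.mp hj with hj | rfl
    · exact hη2 x y (h.trans_le (min_le_left _ _)) j hj
    · exact (h2 (h.trans_le (min_le_right _ _))).le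

lemma sep_bdd {f : ℕ → X → X} (hf : ∀ i, Continuous (f i)) (K : Set X) (n : ℕ)
    {ε : ℝ} (hε : 0 < ε) :
    BddAbove {m : ℕ | ∃ F : Set X, F.Finite ∧ F.ncard = m ∧ IsSepSet f K n ε F} := by
  obtain ⟨η, hη, hsep⟩ := exists_eta hf n hε
  obtain ⟨T, -, hTfin, hcov⟩ :=
    finite_cover_balls_of_compact (isCompact_univ (X := X)) (half_pos hη)
  refine ⟨T.ncard, ?_⟩
  rintro m ⟨F, hFfin, rfl, hFK, hFs⟩
  choose c hcT hcb using fun x : X => Set.mem_iUnion₂.mp (hcov (Set.mem_univ x))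
  refine Set.ncard_le_ncard_of_injOn c (fun x _ => hcT x) ?_ hTfin
  intro x hx y hy hxy
  by_contra hne
  obtain ⟨j, hj, hd⟩ := hFs x hx y hy hne
  have hlt : dist x y < η := by
    have h1 := hcb x
    have h2 := hcb y
    rw [hxy] at h1
    rw [mem_ball] at h1 h2
    calc dist x y ≤ dist x (c y) + dist (c y) y := dist_triangle _ _ _
    _ < η/2 + η/2 := add_lt_add h1 (by rwa [dist_comm])
    _ = η := add_halves η
  exact absurd (hsep x y hlt j hj) (not_le.mpr hd)

lemma sep_zero_mem (f : ℕ → X → X) (K : Set X) (n : ℕ) (ε : ℝ) :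
    0 ∈ {m : ℕ | ∃ F : Set X, F.Finite ∧ F.ncard = m ∧ IsSepSet f K n ε F} :=
  ⟨∅, Set.finite_empty, Set.ncard_empty X,
    Set.empty_subset K, fun x hx => absurd hx (Set.notMem_empty x)⟩

lemma sepNum_one_le {f : ℕ → X → X} (hf : ∀ i, Continuous (f i)) {K : Set X}
    (hK : K.Nonempty) (n : ℕ) {ε : ℝ} (hε : 0 < ε) : 1 ≤ sepNum f K n ε := by
  obtain ⟨x₀, hx₀⟩ := hK
  refine le_csSup (sep_bdd hf K n hε) ?_
  exact ⟨{x₀}, Set.finite_singleton _, Set.ncard_singleton _,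
    Set.singleton_subset_iff.mpr hx₀, fun x hx y hy hxy =>
      absurd ((Set.eq_of_mem_singleton hx).trans (Set.eq_of_mem_singleton hy).symm) hxy⟩

lemma exists_max_sep {f : ℕ → X → X} (hf : ∀ i, Continuous (f i)) (K : Set X) (n : ℕ)
    {ε : ℝ} (hε : 0 < ε) :
    ∃ F : Set X, F.Finite ∧ F.ncard = sepNum f K n ε ∧ IsSepSet f K n ε F ∧
      ∀ y ∈ K, ∃ x ∈ F, ∀ j < n, dist (comps f 1 j y) (comps f 1 j x) ≤ ε := by
  have hbdd := sep_bdd hf K n hε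
  obtain ⟨F, hFfin, hFcard, hFsep⟩ := Nat.sSup_mem ⟨0, sep_zero_mem f K n ε⟩ hbdd
  refine ⟨F, hFfin, hFcard, hFsep, fun y hy => ?_⟩
  by_contra hcon
  push_neg at hcon
  have hyF : y ∉ F := by
    intro hyF
    obtain ⟨j, -, hd⟩ := hcon y hyF
    rw [dist_self] at hd
    linarith
  have hsep' : IsSepSet f K n ε (insert y F) := by
    refine ⟨Set.insert_subset hy hFsep.1, ?_⟩
    intro x hx z hz hxz
    rcases Set.mem_insert_iff.mp hx with rfl | hx' <;>
      rcases Set.mem_insert_iff.mp hz with rfl | hz'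
    · exact absurd rfl hxz
    · exact hcon z hz'
    · obtain ⟨j, hj, hd⟩ := hcon x hx'
      exact ⟨j, hj, by rwa [dist_comm]⟩
    · exact hFsep.2 x hx' z hz' hxz
  have hle : F.ncard + 1 ≤ sepNum f K n ε :=
    le_csSup hbdd ⟨insert y F, hFfin.insert y,
      Set.ncard_insert_of_notMem hyF hFfin, hsep'⟩
  have hFcard' : F.ncard = sepNum f K n ε := hFcard
  omega

lemma sepNum_mono {f : ℕ → X → X} (hf : ∀ i, Continuous (f i)) (K : Set X) (n : ℕ)
    {ε ε' : ℝ} (h0 : 0 < ε') (h : ε' ≤ ε) : sepNum f K n ε ≤ sepNum f K n ε' := by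
  refine csSup_le_csSup (sep_bdd hf K n h0) ⟨0, sep_zero_mem f K n ε⟩ ?_
  rintro m ⟨F, h1, h2, h3, h4⟩
  refine ⟨F, h1, h2, h3, fun x hx y hy hxy => ?_⟩
  obtain ⟨j, hj, hd⟩ := h4 x hx y hy hxy
  exact ⟨j, hj, lt_of_le_of_lt h hd⟩

lemma pesinM_mono (f : ℕ → X → X) (K : Set X) (s : ℝ) (U : Set (Set X)) (α : ℝ)
    {N N' : ℕ} (h : N ≤ N') : pesinM f K s U α N ≤ pesinM f K s U α N' := by
  apply sInf_le_sInf
  rintro t ⟨G, ⟨hG1, hG2, hG3⟩, rfl⟩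
  exact ⟨G, ⟨hG1, fun p hp => ⟨h.trans (hG2 p hp).1, (hG2 p hp).2⟩, hG3⟩, rfl⟩

lemma pesinM_le {f : ℕ → X → X} (hf : ∀ i, Continuous (f i)) (K : Set X) {U : Set (Set X)}
    (s α : ℝ) {δ ε : ℝ} (hε : 0 < ε) (hεδ : ε < δ)
    (hLeb : ∀ x : X, ∃ u ∈ U, Metric.ball x δ ⊆ u) (n : ℕ) :
    pesinM f K s U α n ≤
      (sepNum f K n ε : ℝ≥0∞) * ENNReal.ofReal (Real.exp (-α * (n : ℝ) ^ s)) := by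
  obtain ⟨F, hFfin, hFcard, hFsep, hFspan⟩ := exists_max_sep hf K n hε
  choose u hu hub using hLeb
  set g : X → ℕ × (ℕ → Set X) := fun x => (n, fun j => u (comps f 1 j x)) with hg
  have hGfin : (g '' F).Finite := hFfin.image g
  have hcover : IsStringCover f U K n (g '' F) := by
    refine ⟨hGfin.countable, ?_, ?_⟩
    · rintro p ⟨x, hx, rfl⟩
      exact ⟨le_refl n, fun j hj => hu _⟩
    · intro y hy
      obtain ⟨x, hx, hspan⟩ := hFspan y hy
      refine Set.mem_iUnion₂.mpr ⟨g x, Set.mem_image_of_mem g hx, ?_⟩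
      refine Set.mem_iInter₂.mpr fun j hj => ?_
      rw [Finset.mem_range] at hj
      exact hub (comps f 1 j x) (Metric.mem_ball.mpr (lt_of_le_of_lt (hspan j hj) hεδ))
  have hle : pesinM f K s U α n ≤
      ∑' p : (g '' F), ENNReal.ofReal (Real.exp (-α * ((p : ℕ × (ℕ → Set X)).1 : ℝ) ^ s)) :=
    sInf_le ⟨g '' F, hcover, rfl⟩
  refine hle.trans ?_
  have heq : ∀ p : (g '' F),
      ENNReal.ofReal (Real.exp (-α * ((p : ℕ × (ℕ → Set X)).1 : ℝ) ^ s))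
        = ENNReal.ofReal (Real.exp (-α * (n : ℝ) ^ s)) := by
    rintro ⟨p, x, hx, rfl⟩
    rfl
  rw [tsum_congr heq]
  haveI := hGfin.fintype
  rw [tsum_fintype, Finset.sum_const, nsmul_eq_mul]
  refine mul_le_mul_left ?_ _
  have : Fintype.card (g '' F) ≤ sepNum f K n ε := by
    rw [← Nat.card_eq_fintype_card, Nat.card_coe_set_eq]
    exact (Set.ncard_image_le hFfin).trans_eq hFcard
  rw [Finset.card_univ]
  exact_mod_cast this

end AuxProof

section CoreProof
open Metric Filter

variable {X : Type*} [MetricSpace X] [CompactSpace X]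

lemma pesinOuter_eq_zero {f : ℕ → X → X} (hf : ∀ i, Continuous (f i)) {K : Set X}
    (hK : K.Nonempty) {s : ℝ} (hs : 0 < s) {U : Set (Set X)} (hU : IsFiniteOpenCover U)
    {α : ℝ} (hα : hSepLow f K s < ENNReal.ofReal α) :
    pesinOuter f K s U α = 0 := by
  set h := hSepLow f K s with hh
  have hht : h ≠ ⊤ := ne_top_of_lt hα
  have hαpos : 0 < α := by
    by_contra hc
    push_neg at hc
    rw [ENNReal.ofReal_eq_zero.mpr hc] at hα
    simp at hα
  have htr : h.toReal < α := (ENNReal.lt_ofReal_iff_toReal_lt hht).mp hα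
  set α' := (h.toReal + α) / 2 with hα'def
  have htr0 : 0 ≤ h.toReal := ENNReal.toReal_nonneg
  have hα'pos : 0 < α' := by rw [hα'def]; linarith
  have hα'lt : α' < α := by rw [hα'def]; linarith
  have hhα' : h < ENNReal.ofReal α' :=
    (ENNReal.lt_ofReal_iff_toReal_lt hht).mpr (by rw [hα'def]; linarith)
  -- Lebesgue number
  obtain ⟨hUfin, hUopen, hUcov⟩ := hU
  have hcov : (Set.univ : Set X) ⊆ ⋃ u : U, (u : Set X) := by
    rw [← Set.sUnion_eq_iUnion, hUcov]
  obtain ⟨δ, hδ, hLeb0⟩ := lebesgue_number_lemma_of_metric isCompact_univ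
    (fun u : U => hUopen u u.2) hcov
  have hLeb : ∀ x : X, ∃ u ∈ U, Metric.ball x δ ⊆ u := fun x => by
    obtain ⟨u, hu⟩ := hLeb0 x (Set.mem_univ x)
    exact ⟨u, u.2, hu⟩
  set ε := δ / 2 with hεdef
  have hε : 0 < ε := half_pos hδ
  have hεδ : ε < δ := half_lt_self hδ
  set uu : ℕ → ℝ≥0∞ := fun n =>
    ENNReal.ofReal (Real.log (sepNum f K n ε : ℝ)) / (n : ℝ≥0∞) ^ s with huu
  -- Claim A : liminf uu ≤ h
  have hA : Filter.liminf uu Filter.atTop ≤ h := by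
    rw [hh, hSepLow]
    refine le_limsup_of_frequently_le ?_
    have hev : ∀ᶠ ε' in nhdsWithin (0:ℝ) (Set.Ioi 0), Filter.liminf uu Filter.atTop ≤
        Filter.liminf (fun n : ℕ =>
          ENNReal.ofReal (Real.log (sepNum f K n ε' : ℝ)) / (n : ℝ≥0∞) ^ s)
          Filter.atTop := by
      filter_upwards [Ioo_mem_nhdsGT_of_mem (Set.mem_Ico.mpr ⟨le_refl (0:ℝ), hε⟩)]
        with ε' hε'
      refine Filter.liminf_le_liminf (Filter.Eventually.of_forall fun n => ?_)
      refine ENNReal.div_le_div_right (ENNReal.ofReal_le_ofReal ?_) _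
      have h1 : (1 : ℝ) ≤ (sepNum f K n ε : ℝ) := by
        exact_mod_cast sepNum_one_le hf hK n hε
      refine Real.log_le_log (by linarith) ?_
      exact_mod_cast sepNum_mono hf K n hε'.1 hε'.2.le
    exact hev.frequently
  -- Claim D : frequently uu n < ofReal α'
  have hfreq : ∃ᶠ n in Filter.atTop, uu n < ENNReal.ofReal α' := by
    by_contra hc
    rw [Filter.not_frequently] at hc
    have hge : ENNReal.ofReal α' ≤ Filter.liminf uu Filter.atTop := by
      refine le_liminf_of_le ?_ (hc.mono fun n hn => not_lt.mp hn)
      isBoundedDefault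
    exact absurd (hge.trans hA) (not_le.mpr hhα')
  -- frequently pesinM small
  have hfreq2 : ∃ᶠ n in Filter.atTop,
      pesinM f K s U α n ≤ ENNReal.ofReal (Real.exp ((α' - α) * (n : ℝ) ^ s)) := by
    refine ((Filter.eventually_ge_atTop 1).and_frequently hfreq).mono ?_
    rintro n ⟨hn1, hn2⟩
    have hnR : (1 : ℝ) ≤ (n : ℝ) := by exact_mod_cast hn1
    have hns : (0 : ℝ) < (n : ℝ) ^ s := Real.rpow_pos_of_pos (by linarith) s
    have hb0 : ((n : ℝ≥0∞)) ^ s = ENNReal.ofReal ((n : ℝ) ^ s) := by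
      rw [← ENNReal.ofReal_natCast n, ENNReal.ofReal_rpow_of_pos (by linarith)]
    have hlt : ENNReal.ofReal (Real.log (sepNum f K n ε : ℝ)) <
        ENNReal.ofReal α' * ((n : ℝ≥0∞)) ^ s := by
      refine (ENNReal.div_lt_iff ?_ ?_).mp hn2
      · left; rw [hb0]; simp only [ne_eq, ENNReal.ofReal_eq_zero, not_le]; linarith
      · left; rw [hb0]; exact ENNReal.ofReal_ne_top
    rw [hb0, ← ENNReal.ofReal_mul hα'pos.le] at hlt
    have hlog : Real.log (sepNum f K n ε : ℝ) < α' * (n : ℝ) ^ s :=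
      (ENNReal.ofReal_lt_ofReal_iff (by positivity)).mp hlt
    have hm1 : (1 : ℝ) ≤ (sepNum f K n ε : ℝ) := by
      exact_mod_cast sepNum_one_le hf hK n hε
    have hmlt : (sepNum f K n ε : ℝ) ≤ Real.exp (α' * (n : ℝ) ^ s) :=
      ((Real.log_lt_iff_lt_exp (by linarith)).mp hlog).le
    calc pesinM f K s U α n
        ≤ (sepNum f K n ε : ℝ≥0∞) * ENNReal.ofReal (Real.exp (-α * (n : ℝ) ^ s)) :=
          pesinM_le hf K s α hε hεδ hLeb n
      _ ≤ ENNReal.ofReal (Real.exp (α' * (n : ℝ) ^ s)) *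
            ENNReal.ofReal (Real.exp (-α * (n : ℝ) ^ s)) := by
          refine mul_le_mul_left ?_ _
          rw [← ENNReal.ofReal_natCast]
          exact ENNReal.ofReal_le_ofReal hmlt
      _ = ENNReal.ofReal (Real.exp ((α' - α) * (n : ℝ) ^ s)) := by
          rw [← ENNReal.ofReal_mul (Real.exp_nonneg _), ← Real.exp_add,
            show α' * (n : ℝ) ^ s + -α * (n : ℝ) ^ s = (α' - α) * (n : ℝ) ^ s by ring]
  -- the bound tends to zero
  have hT : Filter.Tendsto (fun n : ℕ => ENNReal.ofReal (Real.exp ((α' - α) * (n : ℝ) ^ s)))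
      Filter.atTop (nhds 0) := by
    have t1 : Filter.Tendsto (fun n : ℕ => (α' - α) * (n : ℝ) ^ s) Filter.atTop Filter.atBot :=
      Filter.Tendsto.const_mul_atTop_of_neg (by linarith)
        ((tendsto_rpow_atTop hs).comp tendsto_natCast_atTop_atTop)
    have t2 := Real.tendsto_exp_atBot.comp t1
    have t3 := (ENNReal.continuous_ofReal.tendsto 0).comp t2
    rw [ENNReal.ofReal_zero] at t3
    exact t3
  -- conclude
  rw [pesinOuter]
  refine ENNReal.iSup_eq_zero.mpr fun N => ?_
  rw [← le_zero_iff]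
  refine le_of_forall_gt_imp_ge_of_dense fun c hc => ?_
  obtain ⟨M, hM⟩ := Filter.eventually_atTop.mp (hT.eventually_lt_const hc)
  obtain ⟨n, hn, hn2⟩ := Filter.frequently_atTop.mp hfreq2 (max N M)
  exact ((pesinM_mono f K s U α (le_trans (le_max_left N M) hn)).trans hn2).trans
    (hM n (le_trans (le_max_right N M) hn)).le

lemma pesinCrit_le {f : ℕ → X → X} (hf : ∀ i, Continuous (f i)) {K : Set X}
    (hK : K.Nonempty) {s : ℝ} (hs : 0 < s) {U : Set (Set X)} (hU : IsFiniteOpenCover U) :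
    pesinCrit f K s U ≤ ((hSepLow f K s : ℝ≥0∞) : EReal) := by
  refine le_of_forall_gt_imp_ge_of_dense fun b hb => ?_
  obtain ⟨x, hx1, hx2⟩ := EReal.exists_between_coe_real hb
  have hx : hSepLow f K s < ENNReal.ofReal x := by
    rw [← EReal.coe_ennreal_lt_coe_ennreal_iff, EReal.coe_ennreal_ofReal]
    exact hx1.trans_le (EReal.coe_le_coe_iff.mpr (le_max_left x 0))
  have h0 := pesinOuter_eq_zero hf hK hs hU hx
  calc pesinCrit f K s U ≤ (x : EReal) := sInf_le ⟨x, h0, rfl⟩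
    _ ≤ b := hx2.le

set_option maxHeartbeats 1000000 in
lemma pesinCrit_nonneg (f : ℕ → X → X) {K : Set X} (hK : K.Nonempty) (s : ℝ)
    (U : Set (Set X)) : (0 : EReal) ≤ pesinCrit f K s U := by
  refine le_sInf ?_
  rintro b ⟨α, hα, rfl⟩
  rcases le_or_gt α 0 with hα0 | hα0
  · exfalso
    have h1 : (1 : ℝ≥0∞) ≤ pesinM f K s U α 0 := by
      refine le_sInf ?_
      rintro t ⟨G, ⟨hG1, hG2, hG3⟩, rfl⟩
      obtain ⟨x₀, hx₀⟩ := hK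
      obtain ⟨p, hp, -⟩ := Set.mem_iUnion₂.mp (hG3 hx₀)
      refine le_trans ?_ (ENNReal.le_tsum (⟨p, hp⟩ : G))
      rw [ENNReal.one_le_ofReal]
      refine Real.one_le_exp ?_
      have h2 : (0 : ℝ) ≤ ((p.1 : ℕ) : ℝ) ^ s := Real.rpow_nonneg (Nat.cast_nonneg _) s
      nlinarith
    have h2 : pesinOuter f K s U α = 0 := hα
    have h3 := h1.trans ((le_iSup (pesinM f K s U α) 0).trans_eq h2)
    simp at h3
  · exact EReal.coe_nonneg.mpr hα0.le

lemma pesinEnt_nonneg (f : ℕ → X → X) {K : Set X} (hK : K.Nonempty) (s : ℝ) :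
    (0 : EReal) ≤ pesinEnt f K s := by
  have hU : IsFiniteOpenCover ({Set.univ} : Set (Set X)) := by
    refine ⟨Set.finite_singleton _, fun u hu => ?_, Set.sUnion_singleton _⟩
    · rw [Set.mem_singleton_iff] at hu; rw [hu]; exact isOpen_univ
  exact le_trans (pesinCrit_nonneg f hK s _) (le_iSup₂_of_le {Set.univ} hU (le_refl _))

end CoreProof

/-- Pesin entropy is bounded by the lower classical `s`-entropy; hence
`D(f,K) ≤ D̲_K(f) ≤ D̄_K(f)` for invariant `K`. -/
theorem pesin_le_lower {X : Type*} [MetricSpace X] [CompactSpace X] (f : ℕ → X → X)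
    (hf : ∀ i, Continuous (f i)) (K : Set X) (hK : K.Nonempty)
    (hinv : ∀ i, 1 ≤ i → f i ⁻¹' K = K) :
    (∀ s : ℝ, 0 < s → pesinEnt f K s ≤ ((hSepLow f K s : ℝ≥0∞) : EReal)) ∧
      pesinDim f K ≤ DlowSep f K ∧ DlowSep f K ≤ DbarSep f K := by
  have part1 : ∀ s : ℝ, 0 < s → pesinEnt f K s ≤ ((hSepLow f K s : ℝ≥0∞) : EReal) :=
    fun s hs => iSup₂_le fun U hU => pesinCrit_le hf hK hs hU
  refine ⟨part1, ?_, ?_⟩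
  · refine sInf_le_sInf (Set.image_mono ?_)
    rintro s ⟨hs, h0⟩
    refine ⟨hs, le_antisymm ?_ (pesinEnt_nonneg f hK s)⟩
    have h1 := part1 s hs
    rwa [h0, EReal.coe_ennreal_zero] at h1
  · refine sInf_le_sInf (Set.image_mono ?_)
    rintro s ⟨hs, h0⟩
    refine ⟨hs, le_antisymm ?_ zero_le⟩
    rw [← h0]
    refine Filter.limsup_le_limsup (Filter.Eventually.of_forall fun ε => ?_)
    exact liminf_le_limsup
end
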